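/- For a forest T_v rooted at a hypernode v, let 𝒳(v) be the (finite) collection of all hypernode sequences (x_1, …, x_n) that can occur after x_0 = v in the SEI selection process (i.e., x_{i+1} ∈ H(x_i) for each i, ending at the leaves). Assuming all relevant subtree costs are positive, the squared coefficient of variation of the SEI estimate satisfies CV²(|v|·C_SEI(T_v)) ≤ max over (x_1, …, x_n) ∈ 𝒳(v) of α(v, x_1, …, x_n), minus 1. (Paper's Theorem 7.) -/

import Mathlib

open Finset

/-- A finite rooted tree on a finite node type `V`.  The root is its own parent,
every non-root node has a parent whose depth is one smaller, and the root is the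
unique node of depth `0`. -/
structure FinRootedTree (V : Type) [Fintype V] [DecidableEq V] where
  root : V
  parent : V → V
  depth : V → ℕ
  depth_root : depth root = 0
  parent_root : parent root = root
  depth_parent : ∀ v, v ≠ root → depth (parent v) + 1 = depth v
  eq_root_of_depth_zero : ∀ v, depth v = 0 → v = root

namespace FinRootedTree

variable {V : Type} [Fintype V] [DecidableEq V]

/-- The set of children of a node. -/
def children (T : FinRootedTree V) (x : V) : Finset V :=
  Finset.univ.filter fun w => w ≠ T.root ∧ T.parent w = x

/-- `S(v)`: the set of all children of nodes of a hypernode `v`. -/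
def succs (T : FinRootedTree V) (v : Finset V) : Finset V :=
  v.biUnion T.children

/-- The set of nodes of the subtree rooted at `x` (the descendants of `x`,
including `x` itself). -/
def desc (T : FinRootedTree V) (x : V) : Finset V :=
  Finset.univ.filter fun w =>
    x ∈ (Finset.range (T.depth w + 1)).image fun k => T.parent^[k] w

/-- `Cost(T_x)`: the total cost of the subtree rooted at `x`. -/
noncomputable def subtreeCost (T : FinRootedTree V) (c : V → ℝ) (x : V) : ℝ :=
  ∑ w ∈ T.desc x, c w

/-- `Cost(T_v)`: the total cost of the forest rooted at the hypernode `v`. -/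
noncomputable def forestCost (T : FinRootedTree V) (c : V → ℝ) (v : Finset V) : ℝ :=
  ∑ x ∈ v, T.subtreeCost c x

/-- `H(v)`: the hyperchildren of `v` for budget `B`, i.e. the subsets of `S(v)`
of size `min B |S(v)|`. -/
def hyper (T : FinRootedTree V) (B : ℕ) (v : Finset V) : Finset (Finset V) :=
  (T.succs v).powersetCard (min B (T.succs v).card)

/-- A hypernode: a nonempty set of distinct nodes, all at the same depth. -/
def IsHypernode (T : FinRootedTree V) (v : Finset V) : Prop :=
  v.Nonempty ∧ ∀ a ∈ v, ∀ b ∈ v, T.depth a = T.depth b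

/-- Expectation functional of the SEI estimator `C_SEI(T_v)` (with importance
function `r`): `seiE T c B r fuel v g` is `E[g(C_SEI(T_v))]`, defined by the
recursion of Algorithm 2, where the hypernode `w` is drawn from `H(v)` with
probability `r(w) / (r(S(v)) * C(|S(v)|-1, |w|-1))`, with enough fuel to reach
the leaves. -/
noncomputable def seiE (T : FinRootedTree V) (c : V → ℝ) (B : ℕ)
    (r : V → ℝ) : ℕ → Finset V → (ℝ → ℝ) → ℝ
  | 0, v, g => g ((∑ x ∈ v, c x) / (v.card : ℝ))
  | fuel + 1, v, g =>
      if T.succs v = ∅ then g ((∑ x ∈ v, c x) / (v.card : ℝ))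
      else
        ∑ w ∈ T.hyper B v,
          ((∑ a ∈ w, r a) /
              ((∑ a ∈ T.succs v, r a) *
                ((((T.succs v).card - 1).choose (w.card - 1) : ℕ) : ℝ))) *
            seiE T c B r fuel w fun y =>
              g ((∑ x ∈ v, c x) / (v.card : ℝ) +
                ((w.card : ℝ) / (v.card : ℝ)) *
                  ((∑ a ∈ T.succs v, r a) / (∑ a ∈ w, r a)) * y)

/-- `Var(|v| * C_SEI(T_v))`. -/
noncomputable def seiVar (T : FinRootedTree V) (c : V → ℝ) (B : ℕ) (r : V → ℝ)
    (fuel : ℕ) (v : Finset V) : ℝ :=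
  seiE T c B r fuel v (fun y => ((v.card : ℝ) * y) ^ 2) -
    (seiE T c B r fuel v fun y => (v.card : ℝ) * y) ^ 2

/-- `CV²(|v| * C_SEI(T_v)) = Var(|v| * C_SEI(T_v)) / E[|v| * C_SEI(T_v)]²`. -/
noncomputable def seiCV2 (T : FinRootedTree V) (c : V → ℝ) (B : ℕ) (r : V → ℝ)
    (fuel : ℕ) (v : Finset V) : ℝ :=
  seiVar T c B r fuel v /
    (seiE T c B r fuel v fun y => (v.card : ℝ) * y) ^ 2

/-- The set of all complete hypernode sequences `(x_1, …)` that can occur after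
`x_0 = v` in the SEI selection process (each `x_{i+1} ∈ H(x_i)`, stopping at
the terminal position `S(x_k) = ∅`), given enough fuel. -/
def seqs (T : FinRootedTree V) (B : ℕ) : ℕ → Finset V → Finset (List (Finset V))
  | 0, _ => {[]}
  | fuel + 1, v =>
      if T.succs v = ∅ then {[]}
      else (T.hyper B v).biUnion fun w => (seqs T B fuel w).image fun l => w :: l

/-- `α(x_0, x_1, …, x_n) = ∏_{i=1}^n (r(S(x_{i-1}))/r(x_i)) * (Cost(T_{x_i})/Cost(T_{S(x_{i-1})}))`,
for the sequence starting at `v` and continuing along the list `l`. -/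
noncomputable def alphaSeq (T : FinRootedTree V) (c r : V → ℝ) :
    Finset V → List (Finset V) → ℝ
  | _, [] => 1
  | v, w :: l =>
      ((∑ a ∈ T.succs v, r a) / (∑ a ∈ w, r a)) *
        (T.forestCost c w / T.forestCost c (T.succs v)) * alphaSeq T c r w l

variable (T : FinRootedTree V)

lemma mem_children {x y : V} : y ∈ T.children x ↔ y ≠ T.root ∧ T.parent y = x := by
  simp [children]

lemma depth_of_mem_children {x y : V} (h : y ∈ T.children x) :
    T.depth y = T.depth x + 1 := by
  rw [mem_children] at h
  rw [← T.depth_parent y h.1, h.2]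

lemma depth_parent_iter {k : ℕ} {w : V} (h : k ≤ T.depth w) :
    T.depth (T.parent^[k] w) = T.depth w - k := by
  induction k with
  | zero => simp
  | succ k ih =>
    rw [Function.iterate_succ_apply']
    have hk : k ≤ T.depth w := Nat.le_of_succ_le h
    have h1 : T.depth (T.parent^[k] w) = T.depth w - k := ih hk
    have hne : T.parent^[k] w ≠ T.root := by
      intro he
      rw [he, T.depth_root] at h1
      omega
    have := T.depth_parent _ hne
    omega

lemma depth_lt_card (x : V) : T.depth x < Fintype.card V := by
  have hinj : Function.Injective (fun k : Fin (T.depth x + 1) => T.parent^[k] x) := by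
    intro a b hab
    have ha := T.depth_parent_iter (w := x) (Nat.lt_succ_iff.1 a.2)
    have hb := T.depth_parent_iter (w := x) (Nat.lt_succ_iff.1 b.2)
    simp only at hab
    rw [hab, hb] at ha
    have := a.2; have := b.2
    exact Fin.ext (by omega)
  have := Fintype.card_le_of_injective _ hinj
  simpa using this

lemma mem_desc {x w : V} : w ∈ T.desc x ↔ ∃ k ≤ T.depth w, T.parent^[k] w = x := by
  simp only [desc, mem_filter, mem_univ, true_and, mem_image, mem_range, Nat.lt_succ_iff]

lemma depth_le_and_iter_of_mem_desc {x w : V} (h : w ∈ T.desc x) :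
    T.depth x ≤ T.depth w ∧ T.parent^[T.depth w - T.depth x] w = x := by
  rw [mem_desc] at h
  obtain ⟨k, hk, he⟩ := h
  have hd : T.depth (T.parent^[k] w) = T.depth w - k := T.depth_parent_iter hk
  rw [he] at hd
  have hx : T.depth x ≤ T.depth w := by omega
  have : T.depth w - T.depth x = k := by omega
  rw [this]
  exact ⟨hx, he⟩

lemma desc_eq (x : V) : T.desc x = insert x ((T.children x).biUnion T.desc) := by
  ext w
  simp only [mem_insert, mem_biUnion, mem_desc]
  constructor
  · rintro ⟨k, hk, he⟩
    cases k with
    | zero => left; exact he.symm.symm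
    | succ j =>
      right
      refine ⟨T.parent^[j] w, ?_, j, Nat.le_of_succ_le hk, rfl⟩
      have hd : T.depth (T.parent^[j] w) = T.depth w - j :=
        T.depth_parent_iter (Nat.le_of_succ_le hk)
      have hne : T.parent^[j] w ≠ T.root := by
        intro hcon; rw [hcon, T.depth_root] at hd; omega
      rw [mem_children]
      exact ⟨hne, by rw [← Function.iterate_succ_apply' T.parent j w]; exact he⟩
  · rintro (rfl | ⟨y, hy, j, hj, he⟩)
    · exact ⟨0, Nat.zero_le _, rfl⟩
    · rw [mem_children] at hy
      refine ⟨j + 1, ?_, by rw [Function.iterate_succ_apply', he]; exact hy.2⟩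
      have hd : T.depth (T.parent^[j] w) = T.depth w - j := T.depth_parent_iter hj
      rw [he] at hd
      have := T.depth_parent y hy.1
      omega

lemma desc_disjoint {y₁ y₂ : V} (hd : T.depth y₁ = T.depth y₂) (hne : y₁ ≠ y₂) :
    Disjoint (T.desc y₁) (T.desc y₂) := by
  rw [Finset.disjoint_left]
  intro w h1 h2
  obtain ⟨_, e1⟩ := T.depth_le_and_iter_of_mem_desc h1
  obtain ⟨_, e2⟩ := T.depth_le_and_iter_of_mem_desc h2
  rw [hd] at e1
  exact hne (e1.symm.trans e2)

lemma not_mem_biUnion_children (x : V) : x ∉ (T.children x).biUnion T.desc := by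
  rw [mem_biUnion]
  rintro ⟨y, hy, hx⟩
  have h1 := (T.depth_le_and_iter_of_mem_desc hx).1
  have h2 := T.depth_of_mem_children hy
  omega




variable (c r : V → ℝ) (B : ℕ)

lemma subtreeCost_eq (x : V) :
    T.subtreeCost c x = c x + ∑ y ∈ T.children x, T.subtreeCost c y := by
  rw [subtreeCost, T.desc_eq x, Finset.sum_insert (T.not_mem_biUnion_children x),
    Finset.sum_biUnion]
  · rfl
  · intro y₁ h1 y₂ h2 hne
    exact T.desc_disjoint (by rw [T.depth_of_mem_children h1, T.depth_of_mem_children h2]) hne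

lemma children_disjoint {x₁ x₂ : V} (hne : x₁ ≠ x₂) :
    Disjoint (T.children x₁) (T.children x₂) := by
  rw [Finset.disjoint_left]
  intro y h1 h2
  rw [mem_children] at h1 h2
  exact hne (h1.2 ▸ h2.2 ▸ rfl)

lemma forestCost_succs (v : Finset V) :
    T.forestCost c v = (∑ x ∈ v, c x) + T.forestCost c (T.succs v) := by
  rw [forestCost, forestCost, succs, Finset.sum_biUnion
    (fun x₁ _ x₂ _ hne => T.children_disjoint hne), ← Finset.sum_add_distrib]
  exact Finset.sum_congr rfl fun x _ => T.subtreeCost_eq c x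

lemma mem_succs_depth {v : Finset V} {y : V} (h : y ∈ T.succs v) :
    ∃ x ∈ v, T.depth y = T.depth x + 1 := by
  rw [succs, mem_biUnion] at h
  obtain ⟨x, hx, hy⟩ := h
  exact ⟨x, hx, T.depth_of_mem_children hy⟩

omit T in
/-- counting: number of `k`-subsets of `s` containing a fixed `a ∈ s`. -/
lemma card_filter_mem_powersetCard {s : Finset V} {a : V} (ha : a ∈ s) {k : ℕ} (hk : 1 ≤ k) :
    ((s.powersetCard k).filter fun w => a ∈ w).card = (s.card - 1).choose (k - 1) := by
  have hce : (s.erase a).card = s.card - 1 := Finset.card_erase_of_mem ha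
  rw [← hce, ← Finset.card_powersetCard (k - 1) (s.erase a)]
  apply Finset.card_nbij' (i := fun w => w.erase a) (j := fun u => insert a u)
  · intro w hw
    simp only [Finset.mem_coe, Finset.mem_filter, Finset.mem_powersetCard] at hw ⊢
    exact ⟨Finset.erase_subset_erase a hw.1.1, by
      rw [Finset.card_erase_of_mem hw.2, hw.1.2]⟩
  · intro u hu
    simp only [Finset.mem_coe, Finset.mem_filter, Finset.mem_powersetCard] at hu ⊢
    have hau : a ∉ u := fun h => (Finset.mem_erase.1 (hu.1 h)).1 rfl
    refine ⟨⟨?_, ?_⟩, Finset.mem_insert_self a u⟩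
    · intro b hb
      rcases Finset.mem_insert.1 hb with rfl | hb
      · exact ha
      · exact Finset.mem_of_mem_erase (hu.1 hb)
    · rw [Finset.card_insert_of_notMem hau, hu.2]; omega
  · intro w hw
    simp only [Finset.mem_coe, Finset.mem_filter] at hw
    exact Finset.insert_erase hw.2
  · intro u hu
    simp only [Finset.mem_coe, Finset.mem_powersetCard] at hu
    exact Finset.erase_insert (fun h => (Finset.mem_erase.1 (hu.1 h)).1 rfl)

omit T in
lemma sum_powersetCard_sum {s : Finset V} {k : ℕ} (hk : 1 ≤ k) (f : V → ℝ) :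
    ∑ w ∈ s.powersetCard k, ∑ a ∈ w, f a
      = ((s.card - 1).choose (k - 1) : ℝ) * ∑ a ∈ s, f a := by
  have h1 : ∀ w ∈ s.powersetCard k, ∑ a ∈ w, f a = ∑ a ∈ s, if a ∈ w then f a else 0 := by
    intro w hw
    rw [Finset.sum_ite_mem]
    congr 1
    exact (Finset.inter_eq_right.2 (Finset.mem_powersetCard.1 hw).1).symm
  rw [Finset.sum_congr rfl h1, Finset.sum_comm]
  rw [Finset.mul_sum]
  refine Finset.sum_congr rfl fun a ha => ?_
  rw [← Finset.sum_filter, Finset.sum_const, card_filter_mem_powersetCard ha hk,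
    nsmul_eq_mul]

lemma seiE_linear :
    ∀ (fuel : ℕ) (v : Finset V) (p q t : ℝ) (g h u : ℝ → ℝ),
      seiE T c B r fuel v (fun y => p * g y + q * h y + t * u y)
        = p * seiE T c B r fuel v g + q * seiE T c B r fuel v h
            + t * seiE T c B r fuel v u
  | 0, v, p, q, t, g, h, u => rfl
  | fuel + 1, v, p, q, t, g, h, u => by
    rw [seiE, seiE, seiE, seiE]
    split
    · rfl
    · rw [Finset.mul_sum, Finset.mul_sum, Finset.mul_sum, ← Finset.sum_add_distrib,
        ← Finset.sum_add_distrib]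
      refine Finset.sum_congr rfl fun w _ => ?_
      rw [seiE_linear fuel w p q t]
      ring

lemma mem_hyper {v w : Finset V} (h : w ∈ T.hyper B v) :
    w ⊆ T.succs v ∧ w.card = min B (T.succs v).card := Finset.mem_powersetCard.1 h

lemma hyper_card_pos {v w : Finset V} (hB : 1 ≤ B) (hs : T.succs v ≠ ∅)
    (h : w ∈ T.hyper B v) : 0 < w.card := by
  rw [(T.mem_hyper B h).2]
  have : 0 < (T.succs v).card := Finset.card_pos.2 (Finset.nonempty_of_ne_empty hs)
  omega

/-- The sum of `r` over hyperchildren. -/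
lemma sum_hyper_sum (hB : 1 ≤ B) {v : Finset V} (hs : T.succs v ≠ ∅) (f : V → ℝ) :
    ∑ w ∈ T.hyper B v, ∑ a ∈ w, f a
      = ((((T.succs v).card - 1).choose (min B (T.succs v).card - 1) : ℕ) : ℝ)
          * ∑ a ∈ T.succs v, f a := by
  apply sum_powersetCard_sum
  have : 0 < (T.succs v).card := Finset.card_pos.2 (Finset.nonempty_of_ne_empty hs)
  omega

lemma choose_pos {v : Finset V} (hB : 1 ≤ B) (hs : T.succs v ≠ ∅) :
    0 < ((T.succs v).card - 1).choose (min B (T.succs v).card - 1) := by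
  apply Nat.choose_pos
  have : 0 < (T.succs v).card := Finset.card_pos.2 (Finset.nonempty_of_ne_empty hs)
  omega

lemma sum_probs (hB : 1 ≤ B) (hr : ∀ x : V, 0 < r x) {v : Finset V} (hs : T.succs v ≠ ∅) :
    ∑ w ∈ T.hyper B v,
        (∑ a ∈ w, r a) /
          ((∑ a ∈ T.succs v, r a) *
            ((((T.succs v).card - 1).choose (w.card - 1) : ℕ) : ℝ)) = 1 := by
  have hcard : ∀ w ∈ T.hyper B v, w.card = min B (T.succs v).card :=
    fun w hw => (T.mem_hyper B hw).2
  have hrS : 0 < ∑ a ∈ T.succs v, r a :=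
    Finset.sum_pos (fun a _ => hr a) (Finset.nonempty_of_ne_empty hs)
  have hC : (0:ℝ) < ((((T.succs v).card - 1).choose (min B (T.succs v).card - 1) : ℕ) : ℝ) := by
    exact_mod_cast T.choose_pos B hB hs
  have : ∑ w ∈ T.hyper B v,
      (∑ a ∈ w, r a) /
        ((∑ a ∈ T.succs v, r a) *
          ((((T.succs v).card - 1).choose (w.card - 1) : ℕ) : ℝ))
      = (∑ w ∈ T.hyper B v, ∑ a ∈ w, r a) /
          ((∑ a ∈ T.succs v, r a) *
            ((((T.succs v).card - 1).choose (min B (T.succs v).card - 1) : ℕ) : ℝ)) := by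
    rw [Finset.sum_div]
    exact Finset.sum_congr rfl fun w hw => by rw [hcard w hw]
  rw [this, T.sum_hyper_sum B hB hs]
  field_simp

lemma seiE_const (hB : 1 ≤ B) (hr : ∀ x : V, 0 < r x) :
    ∀ (fuel : ℕ) (v : Finset V) (k : ℝ), seiE T c B r fuel v (fun _ => k) = k
  | 0, v, k => rfl
  | fuel + 1, v, k => by
    rw [seiE]
    split
    · rfl
    · next hs =>
      have : ∀ w ∈ T.hyper B v,
          ((∑ a ∈ w, r a) /
            ((∑ a ∈ T.succs v, r a) *
              ((((T.succs v).card - 1).choose (w.card - 1) : ℕ) : ℝ))) *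
            seiE T c B r fuel w (fun _ => k)
          = ((∑ a ∈ w, r a) /
            ((∑ a ∈ T.succs v, r a) *
              ((((T.succs v).card - 1).choose (w.card - 1) : ℕ) : ℝ))) * k := by
        intro w _
        rw [seiE_const hB hr fuel w k]
      rw [Finset.sum_congr rfl this, ← Finset.sum_mul, T.sum_probs r B hB hr hs, one_mul]

lemma hyper_nonempty {v : Finset V} : (T.hyper B v).Nonempty := by
  rw [hyper, ← Finset.card_pos, Finset.card_powersetCard]
  exact Nat.choose_pos (Nat.min_le_right _ _)

lemma seqs_nonempty : ∀ (fuel : ℕ) (v : Finset V), (seqs T B fuel v).Nonempty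
  | 0, v => ⟨[], by simp [seqs]⟩
  | fuel + 1, v => by
    rw [seqs]
    split
    · exact ⟨[], Finset.mem_singleton_self _⟩
    · obtain ⟨w, hw⟩ := T.hyper_nonempty B (v := v)
      obtain ⟨l, hl⟩ := seqs_nonempty fuel w
      exact ⟨w :: l, Finset.mem_biUnion.2 ⟨w, hw, Finset.mem_image_of_mem _ hl⟩⟩

lemma cons_mem_seqs {fuel : ℕ} {v w : Finset V} {l : List (Finset V)}
    (hs : T.succs v ≠ ∅) (hw : w ∈ T.hyper B v) (hl : l ∈ seqs T B fuel w) :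
    w :: l ∈ seqs T B (fuel + 1) v := by
  rw [seqs, if_neg hs]
  exact Finset.mem_biUnion.2 ⟨w, hw, Finset.mem_image_of_mem _ hl⟩

omit T in
lemma aux_lin (a s wc vc y : ℝ) (hv : vc ≠ 0) :
    vc * (a / vc + (wc / vc) * s * y) = a * 1 + s * (wc * y) + 0 * y := by
  field_simp; ring

omit T in
lemma aux_sq (a s wc vc y : ℝ) (hv : vc ≠ 0) :
    (vc * (a / vc + (wc / vc) * s * y))^2
      = a^2 * 1 + (2*a*s) * (wc * y) + s^2 * ((wc*y)^2) := by
  field_simp; ring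

lemma forestCost_pos (hpos : ∀ x : V, 0 < T.subtreeCost c x) {v : Finset V}
    (hv : v.Nonempty) : 0 < T.forestCost c v :=
  Finset.sum_pos (fun x _ => hpos x) hv

omit T in
lemma aux_cancel (x y z : ℝ) (hx : x ≠ 0) (hy : y ≠ 0) (hz : z ≠ 0) :
    (x / (y * z)) * (y / x) = 1 / z := by field_simp

omit T in
lemma aux_pt (a P S C Cw CS E2 Mw M : ℝ) (hP : 0 ≤ P) (hS : 0 ≤ S) (hCw : 0 ≤ Cw)
    (hCS : 0 < CS) (hPS : P * S = 1 / C) (hE2 : E2 ≤ Mw * Cw ^ 2)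
    (hMle : S * (Cw / CS) * Mw ≤ M) :
    P * (a ^ 2 + (2 * a * S) * Cw + S ^ 2 * E2)
      ≤ a ^ 2 * P + (2 * a / C) * Cw + ((M * CS) / C) * Cw := by
  have h0 : P * (a ^ 2 + (2 * a * S) * Cw + S ^ 2 * E2)
      = P * a ^ 2 + P * ((2 * a * S) * Cw) + P * (S ^ 2 * E2) := by ring
  have h1 : P * (S ^ 2 * E2) ≤ P * (S ^ 2 * (Mw * Cw ^ 2)) :=
    mul_le_mul_of_nonneg_left (mul_le_mul_of_nonneg_left hE2 (sq_nonneg S)) hP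
  have h2 : P * (S ^ 2 * (Mw * Cw ^ 2)) = (S * (Cw / CS) * Mw) * ((P * S * Cw) * CS) := by
    field_simp
  have h3 : (S * (Cw / CS) * Mw) * ((P * S * Cw) * CS) ≤ M * ((P * S * Cw) * CS) := by
    apply mul_le_mul_of_nonneg_right hMle
    have : 0 ≤ P * S * Cw := by positivity
    positivity
  have h4 : M * ((P * S * Cw) * CS) = ((M * CS) / C) * Cw := by
    rw [show P * S * Cw = 1 / C * Cw from by rw [hPS]]
    ring
  have h5 : P * ((2 * a * S) * Cw) = (2 * a / C) * Cw := by
    rw [show (2:ℝ) * a / C = 2 * a * (1 / C) from by ring, ← hPS]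
    ring
  linarith [h0, h1, h2.le, h2.ge, h3, h4.le, h4.ge, h5.le, h5.ge]

omit T in
lemma aux_e (x C CS : ℝ) (hC : C ≠ 0) : x / C * (C * CS) = x * CS := by
  field_simp

omit T in
lemma aux_final (a CS M : ℝ) (ha : 0 ≤ a) (hCS : 0 ≤ CS) (hM : 1 ≤ M) :
    a ^ 2 * 1 + 2 * a * CS + M * CS * CS ≤ M * (a + CS) ^ 2 := by
  nlinarith [sq_nonneg a, mul_nonneg ha hCS, mul_nonneg (mul_nonneg ha ha) (sub_nonneg.2 hM),
    mul_nonneg (mul_nonneg ha hCS) (sub_nonneg.2 hM)]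

lemma main_bound (hc : ∀ x, 0 ≤ c x) (hpos : ∀ x : V, 0 < T.subtreeCost c x)
    (hB : 1 ≤ B) (hr : ∀ x : V, 0 < r x) :
    ∀ (fuel : ℕ) (v : Finset V), v.Nonempty →
      (∀ x ∈ v, Fintype.card V ≤ fuel + T.depth x) →
      seiE T c B r fuel v (fun y => (v.card : ℝ) * y) = T.forestCost c v ∧
      1 ≤ (seqs T B fuel v).sup' (T.seqs_nonempty B fuel v) (alphaSeq T c r v) ∧
      seiE T c B r fuel v (fun y => ((v.card : ℝ) * y) ^ 2)
        ≤ (seqs T B fuel v).sup' (T.seqs_nonempty B fuel v) (alphaSeq T c r v)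
            * (T.forestCost c v) ^ 2 := by
  intro fuel
  induction fuel with
  | zero =>
    intro v hv hf
    obtain ⟨x, hx⟩ := hv
    have := T.depth_lt_card x
    have := hf x hx
    omega
  | succ fuel IH =>
    intro v hv hf
    have hvc : (0:ℝ) < (v.card : ℝ) := by exact_mod_cast Finset.card_pos.2 hv
    by_cases hs : T.succs v = ∅
    · -- base case: leaves
      have hcv : T.forestCost c v = ∑ x ∈ v, c x := by
        rw [T.forestCost_succs c v, hs]
        simp [forestCost]
      have hseqs : seqs T B (fuel + 1) v = {[]} := by rw [seqs, if_pos hs]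
      have hsup : (seqs T B (fuel+1) v).sup' (T.seqs_nonempty B (fuel+1) v)
          (alphaSeq T c r v) = 1 := by
        rw [Finset.sup'_congr (T.seqs_nonempty B (fuel+1) v) hseqs (fun _ _ => rfl),
          Finset.sup'_singleton]
        rfl
      refine ⟨?_, ?_, ?_⟩
      · rw [seiE, if_pos hs, hcv]
        field_simp
      · rw [hsup]
      · rw [seiE, if_pos hs, hsup, hcv, one_mul]
        rw [mul_div_cancel₀ _ (ne_of_gt hvc)]
    · -- recursive case
      have hsne : (T.succs v).Nonempty := Finset.nonempty_of_ne_empty hs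
      have hrS : 0 < ∑ x ∈ T.succs v, r x := Finset.sum_pos (fun x _ => hr x) hsne
      have hCn := T.choose_pos B hB hs
      have hC : (0:ℝ) < ((((T.succs v).card - 1).choose (min B (T.succs v).card - 1) : ℕ) : ℝ) := by
        exact_mod_cast hCn
      have hCostS : 0 < T.forestCost c (T.succs v) := T.forestCost_pos c hpos hsne
      have hCostv : 0 < T.forestCost c v := T.forestCost_pos c hpos hv
      have ha : 0 ≤ ∑ x ∈ v, c x := Finset.sum_nonneg fun x _ => hc x
      -- facts about each hyperchild
      have hwfact : ∀ w ∈ T.hyper B v, w.Nonempty ∧ (0 < ∑ x ∈ w, r x)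
          ∧ w.card = min B (T.succs v).card
          ∧ (∀ x ∈ w, Fintype.card V ≤ fuel + T.depth x) := by
        intro w hw
        have hwne : w.Nonempty := Finset.card_pos.1 (T.hyper_card_pos B hB hs hw)
        have hinv : ∀ x ∈ w, Fintype.card V ≤ fuel + T.depth x := by
          intro x hx
          obtain ⟨p, hp, hd⟩ := T.mem_succs_depth ((T.mem_hyper B hw).1 hx)
          have := hf p hp
          omega
        exact ⟨hwne, Finset.sum_pos (fun x _ => hr x) hwne, (T.mem_hyper B hw).2, hinv⟩
      -- abbreviations via IH
      have hIH : ∀ w ∈ T.hyper B v,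
          seiE T c B r fuel w (fun y => (w.card : ℝ) * y) = T.forestCost c w ∧
          1 ≤ (seqs T B fuel w).sup' (T.seqs_nonempty B fuel w) (alphaSeq T c r w) ∧
          seiE T c B r fuel w (fun y => ((w.card : ℝ) * y) ^ 2)
            ≤ (seqs T B fuel w).sup' (T.seqs_nonempty B fuel w) (alphaSeq T c r w)
                * (T.forestCost c w) ^ 2 := by
        intro w hw
        exact IH w (hwfact w hw).1 (hwfact w hw).2.2.2
      -- inner seiE computations
      have hinner1 : ∀ w ∈ T.hyper B v,
          seiE T c B r fuel w (fun y =>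
            (v.card : ℝ) * ((∑ x ∈ v, c x) / (v.card : ℝ) +
              ((w.card : ℝ) / (v.card : ℝ)) *
                ((∑ a ∈ T.succs v, r a) / (∑ a ∈ w, r a)) * y))
          = (∑ x ∈ v, c x) +
              ((∑ a ∈ T.succs v, r a) / (∑ a ∈ w, r a)) * T.forestCost c w := by
        intro w hw
        have hfe : (fun y =>
            (v.card : ℝ) * ((∑ x ∈ v, c x) / (v.card : ℝ) +
              ((w.card : ℝ) / (v.card : ℝ)) *
                ((∑ a ∈ T.succs v, r a) / (∑ a ∈ w, r a)) * y))
            = fun y => (∑ x ∈ v, c x) * (fun _ => (1:ℝ)) y +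
                ((∑ a ∈ T.succs v, r a) / (∑ a ∈ w, r a)) *
                  ((fun y => (w.card : ℝ) * y) y) +
                0 * ((fun y => y) y) := by
          funext y
          exact aux_lin _ _ _ _ y (ne_of_gt hvc)
        rw [hfe, T.seiE_linear c r B fuel w, T.seiE_const c r B hB hr, (hIH w hw).1]
        ring
      have hinner2 : ∀ w ∈ T.hyper B v,
          seiE T c B r fuel w (fun y =>
            ((v.card : ℝ) * ((∑ x ∈ v, c x) / (v.card : ℝ) +
              ((w.card : ℝ) / (v.card : ℝ)) *
                ((∑ a ∈ T.succs v, r a) / (∑ a ∈ w, r a)) * y)) ^ 2)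
          = (∑ x ∈ v, c x) ^ 2 +
              (2 * (∑ x ∈ v, c x) * ((∑ a ∈ T.succs v, r a) / (∑ a ∈ w, r a))) *
                T.forestCost c w +
              ((∑ a ∈ T.succs v, r a) / (∑ a ∈ w, r a)) ^ 2 *
                seiE T c B r fuel w (fun y => ((w.card : ℝ) * y) ^ 2) := by
        intro w hw
        have hfe : (fun y =>
            ((v.card : ℝ) * ((∑ x ∈ v, c x) / (v.card : ℝ) +
              ((w.card : ℝ) / (v.card : ℝ)) *
                ((∑ a ∈ T.succs v, r a) / (∑ a ∈ w, r a)) * y)) ^ 2)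
            = fun y => ((∑ x ∈ v, c x) ^ 2) * (fun _ => (1:ℝ)) y +
                (2 * (∑ x ∈ v, c x) * ((∑ a ∈ T.succs v, r a) / (∑ a ∈ w, r a))) *
                  ((fun y => (w.card : ℝ) * y) y) +
                (((∑ a ∈ T.succs v, r a) / (∑ a ∈ w, r a)) ^ 2) *
                  ((fun y => ((w.card : ℝ) * y) ^ 2) y) := by
          funext y
          exact aux_sq _ _ _ _ y (ne_of_gt hvc)
        rw [hfe, T.seiE_linear c r B fuel w, T.seiE_const c r B hB hr, (hIH w hw).1]
        ring
      have hsumCost : ∑ w ∈ T.hyper B v, T.forestCost c w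
          = ((((T.succs v).card - 1).choose (min B (T.succs v).card - 1) : ℕ) : ℝ)
              * T.forestCost c (T.succs v) := by
        have h := T.sum_hyper_sum B hB hs (T.subtreeCost c)
        simpa [forestCost] using h
      -- the mean
      have hmean : seiE T c B r (fuel+1) v (fun y => (v.card : ℝ) * y) = T.forestCost c v := by
        rw [seiE, if_neg hs]
        have hpt : ∀ w ∈ T.hyper B v,
            ((∑ a ∈ w, r a) /
              ((∑ a ∈ T.succs v, r a) *
                ((((T.succs v).card - 1).choose (w.card - 1) : ℕ) : ℝ))) *
              seiE T c B r fuel w (fun y =>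
                (v.card : ℝ) * ((∑ x ∈ v, c x) / (v.card : ℝ) +
                  ((w.card : ℝ) / (v.card : ℝ)) *
                    ((∑ a ∈ T.succs v, r a) / (∑ a ∈ w, r a)) * y))
            = (∑ x ∈ v, c x) * ((∑ a ∈ w, r a) /
                ((∑ a ∈ T.succs v, r a) *
                  ((((T.succs v).card - 1).choose (w.card - 1) : ℕ) : ℝ)))
              + (1 / ((((T.succs v).card - 1).choose (min B (T.succs v).card - 1) : ℕ) : ℝ)) *
                  T.forestCost c w := by
          intro w hw
          rw [hinner1 w hw, (hwfact w hw).2.2.1]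
          have hrw := (hwfact w hw).2.1
          have h1 : (∑ x ∈ w, r x) ≠ 0 := ne_of_gt hrw
          have h2 : (∑ x ∈ T.succs v, r x) ≠ 0 := ne_of_gt hrS
          have h3 : ((((T.succs v).card - 1).choose (min B (T.succs v).card - 1) : ℕ) : ℝ) ≠ 0 :=
            ne_of_gt hC
          field_simp
        rw [Finset.sum_congr rfl hpt, Finset.sum_add_distrib, ← Finset.mul_sum,
          ← Finset.mul_sum, T.sum_probs r B hB hr hs, hsumCost, T.forestCost_succs c v]
        field_simp
      -- the max of alpha over sequences
      have halpha : ∀ (w : Finset V) (l : List (Finset V)),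
          alphaSeq T c r v (w :: l)
            = ((∑ a ∈ T.succs v, r a) / (∑ a ∈ w, r a)) *
                (T.forestCost c w / T.forestCost c (T.succs v)) * alphaSeq T c r w l :=
        fun w l => rfl
      have hMle : ∀ w ∈ T.hyper B v,
          ((∑ a ∈ T.succs v, r a) / (∑ a ∈ w, r a)) *
              (T.forestCost c w / T.forestCost c (T.succs v)) *
              ((seqs T B fuel w).sup' (T.seqs_nonempty B fuel w) (alphaSeq T c r w))
            ≤ (seqs T B (fuel+1) v).sup' (T.seqs_nonempty B (fuel+1) v) (alphaSeq T c r v) := by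
        intro w hw
        obtain ⟨l₀, hl₀, he⟩ :=
          Finset.exists_mem_eq_sup' (T.seqs_nonempty B fuel w) (alphaSeq T c r w)
        rw [he, ← halpha w l₀]
        exact Finset.le_sup' (alphaSeq T c r v) (T.cons_mem_seqs B hs hw hl₀)
      -- 1 ≤ M
      have hM1 : 1 ≤ (seqs T B (fuel+1) v).sup' (T.seqs_nonempty B (fuel+1) v)
          (alphaSeq T c r v) := by
        have hex : ∃ w ∈ T.hyper B v, 1 ≤ ((∑ a ∈ T.succs v, r a) / (∑ a ∈ w, r a)) *
            (T.forestCost c w / T.forestCost c (T.succs v)) := by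
          by_contra hcon
          push_neg at hcon
          have hlt : ∑ w ∈ T.hyper B v,
              (((∑ a ∈ w, r a) /
                ((∑ a ∈ T.succs v, r a) *
                  ((((T.succs v).card - 1).choose (w.card - 1) : ℕ) : ℝ))) *
                (((∑ a ∈ T.succs v, r a) / (∑ a ∈ w, r a)) *
                  (T.forestCost c w / T.forestCost c (T.succs v))))
              < ∑ w ∈ T.hyper B v,
                ((∑ a ∈ w, r a) /
                  ((∑ a ∈ T.succs v, r a) *
                    ((((T.succs v).card - 1).choose (w.card - 1) : ℕ) : ℝ))) := by
            apply Finset.sum_lt_sum_of_nonempty (T.hyper_nonempty B)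
            intro w hw
            have hrw := (hwfact w hw).2.1
            have hCw : (0:ℝ) <
                ((((T.succs v).card - 1).choose (w.card - 1) : ℕ) : ℝ) := by
              rw [(hwfact w hw).2.2.1]; exact hC
            have hPpos : 0 < (∑ a ∈ w, r a) /
                ((∑ a ∈ T.succs v, r a) *
                  ((((T.succs v).card - 1).choose (w.card - 1) : ℕ) : ℝ)) :=
              div_pos hrw (mul_pos hrS hCw)
            nlinarith [hcon w hw, hPpos]
          have hone : ∑ w ∈ T.hyper B v,
              (((∑ a ∈ w, r a) /
                ((∑ a ∈ T.succs v, r a) *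
                  ((((T.succs v).card - 1).choose (w.card - 1) : ℕ) : ℝ))) *
                (((∑ a ∈ T.succs v, r a) / (∑ a ∈ w, r a)) *
                  (T.forestCost c w / T.forestCost c (T.succs v)))) = 1 := by
            have hpt : ∀ w ∈ T.hyper B v,
                (((∑ a ∈ w, r a) /
                  ((∑ a ∈ T.succs v, r a) *
                    ((((T.succs v).card - 1).choose (w.card - 1) : ℕ) : ℝ))) *
                  (((∑ a ∈ T.succs v, r a) / (∑ a ∈ w, r a)) *
                    (T.forestCost c w / T.forestCost c (T.succs v))))
                = (1 / (((((T.succs v).card - 1).choose (min B (T.succs v).card - 1) : ℕ) : ℝ) *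
                    T.forestCost c (T.succs v))) * T.forestCost c w := by
              intro w hw
              rw [(hwfact w hw).2.2.1]
              have hrw := (hwfact w hw).2.1
              have h1 : (∑ x ∈ w, r x) ≠ 0 := ne_of_gt hrw
              have h2 : (∑ x ∈ T.succs v, r x) ≠ 0 := ne_of_gt hrS
              have h3 : ((((T.succs v).card - 1).choose (min B (T.succs v).card - 1) : ℕ) : ℝ) ≠ 0 :=
                ne_of_gt hC
              have h4 : T.forestCost c (T.succs v) ≠ 0 := ne_of_gt hCostS
              field_simp
            rw [Finset.sum_congr rfl hpt, ← Finset.mul_sum, hsumCost]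
            field_simp
          rw [hone, T.sum_probs r B hB hr hs] at hlt
          exact lt_irrefl 1 hlt
        obtain ⟨w₀, hw₀, hα₀⟩ := hex
        have hMw := (hIH w₀ hw₀).2.1
        have h := hMle w₀ hw₀
        nlinarith [hα₀, hMw, h]
      -- second moment bound
      have hsq : seiE T c B r (fuel+1) v (fun y => ((v.card : ℝ) * y) ^ 2)
          ≤ (seqs T B (fuel+1) v).sup' (T.seqs_nonempty B (fuel+1) v) (alphaSeq T c r v)
              * (T.forestCost c v) ^ 2 := by
        rw [seiE, if_neg hs]
        have hpt2 : ∀ w ∈ T.hyper B v,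
            ((∑ a ∈ w, r a) /
              ((∑ a ∈ T.succs v, r a) *
                ((((T.succs v).card - 1).choose (w.card - 1) : ℕ) : ℝ))) *
              seiE T c B r fuel w (fun y =>
                ((v.card : ℝ) * ((∑ x ∈ v, c x) / (v.card : ℝ) +
                  ((w.card : ℝ) / (v.card : ℝ)) *
                    ((∑ a ∈ T.succs v, r a) / (∑ a ∈ w, r a)) * y)) ^ 2)
            ≤ (∑ x ∈ v, c x) ^ 2 * ((∑ a ∈ w, r a) /
                ((∑ a ∈ T.succs v, r a) *
                  ((((T.succs v).card - 1).choose (w.card - 1) : ℕ) : ℝ)))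
              + (2 * (∑ x ∈ v, c x) /
                  ((((T.succs v).card - 1).choose (min B (T.succs v).card - 1) : ℕ) : ℝ)) *
                  T.forestCost c w
              + (((seqs T B (fuel+1) v).sup' (T.seqs_nonempty B (fuel+1) v)
                    (alphaSeq T c r v) * T.forestCost c (T.succs v)) /
                  ((((T.succs v).card - 1).choose (min B (T.succs v).card - 1) : ℕ) : ℝ)) *
                  T.forestCost c w := by
          intro w hw
          rw [hinner2 w hw]
          have hwc := (hwfact w hw).2.2.1
          have hrw := (hwfact w hw).2.1
          have hCostw : 0 < T.forestCost c w := T.forestCost_pos c hpos (hwfact w hw).1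
          have hCeq : ((((T.succs v).card - 1).choose (w.card - 1) : ℕ) : ℝ)
              = ((((T.succs v).card - 1).choose (min B (T.succs v).card - 1) : ℕ) : ℝ) := by
            rw [hwc]
          have hCw0 : ((((T.succs v).card - 1).choose (w.card - 1) : ℕ) : ℝ) ≠ 0 := by
            rw [hCeq]; exact ne_of_gt hC
          rw [← hCeq]
          apply aux_pt
          · exact le_of_lt (div_pos hrw (mul_pos hrS (by rw [← hCeq] at hC; exact hC)))
          · exact le_of_lt (div_pos hrS hrw)
          · exact le_of_lt hCostw
          · exact hCostS
          · exact aux_cancel _ _ _ (ne_of_gt hrw) (ne_of_gt hrS) hCw0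
          · exact (hIH w hw).2.2
          · exact hMle w hw
        refine le_trans (Finset.sum_le_sum hpt2) ?_
        rw [Finset.sum_add_distrib, Finset.sum_add_distrib, ← Finset.mul_sum,
          ← Finset.mul_sum, ← Finset.mul_sum, T.sum_probs r B hB hr hs, hsumCost,
          T.forestCost_succs c v, aux_e _ _ _ (ne_of_gt hC), aux_e _ _ _ (ne_of_gt hC)]
        exact aux_final _ _ _ ha (le_of_lt hCostS) hM1
      exact ⟨hmean, hM1, hsq⟩

/-- Paper's Theorem 7: `CV²(|v|·C_SEI(T_v)) ≤ max_{(x_1,…,x_n) ∈ 𝒳(v)}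
α(v, x_1, …, x_n) − 1`, where `𝒳(v)` is the collection of all hypernode
sequences that can occur after `x_0 = v`. -/
theorem sei_cv2_le_max_alpha (T : FinRootedTree V) (c : V → ℝ)
    (hc : ∀ x, 0 ≤ c x) (hpos : ∀ x : V, 0 < T.subtreeCost c x)
    (B : ℕ) (hB : 1 ≤ B) (r : V → ℝ) (hr : ∀ x : V, 0 < r x)
    (v : Finset V) (hv : T.IsHypernode v)
    (hne : (seqs T B (Fintype.card V) v).Nonempty) :
    seiCV2 T c B r (Fintype.card V) v ≤
      (seqs T B (Fintype.card V) v).sup' hne (fun l => alphaSeq T c r v l) - 1 := by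
  obtain ⟨hmean, hM1, hsq⟩ := T.main_bound c r B hc hpos hB hr (Fintype.card V) v hv.1
    (fun x hx => Nat.le_add_right _ _)
  have hCost : 0 < T.forestCost c v := T.forestCost_pos c hpos hv.1
  have hsupeq : (seqs T B (Fintype.card V) v).sup' hne (fun l => alphaSeq T c r v l)
      = (seqs T B (Fintype.card V) v).sup' (T.seqs_nonempty B (Fintype.card V) v)
          (alphaSeq T c r v) := rfl
  rw [seiCV2, seiVar, hmean, hsupeq, div_le_iff₀ (by positivity)]
  nlinarith [hsq, hCost]

end FinRootedTree
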